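/- For the Grover search problem with minimal gap g_0 = 1/√N, if the dephasing rate satisfies γ = c g_0 for a constant c > 0, then the optimal time scale τ = (∫_0^1 √M(q) dq)^2 with M(q) = (γ/4)|ĝ'(q)|^2/(g(q)^2 + γ^2), |ĝ'(q)| = √(1/N - 1/N^2) · 2/g(q)^2, and g(q)^2 = 4(1-q)q/N + (1-2q)^2, satisfies τ = O(√N) as N → ∞ (i.e., τ is bounded above by C√N for a constant C depending only on c). -/

import Mathlib

/-- Grover gap squared: `g(q)² = 4(1-q)q/N + (1-2q)²`. -/
noncomputable def groverGapSq (N q : ℝ) : ℝ := 4 * (1 - q) * q / N + (1 - 2 * q) ^ 2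

/-- Squared Bloch-sphere velocity: `|ĝ'(q)|² = (1/N - 1/N²) · 4 / g(q)⁴`. -/
noncomputable def groverVelSq (N q : ℝ) : ℝ := (1 / N - 1 / N ^ 2) * 4 / (groverGapSq N q) ^ 2

/-- The mass `M(q) = (γ/4) |ĝ'(q)|² / (g(q)² + γ²)` with dephasing rate `γ = c/√N`. -/
noncomputable def groverMass (c N q : ℝ) : ℝ :=
  (c / Real.sqrt N) / 4 * groverVelSq N q / (groverGapSq N q + (c / Real.sqrt N) ^ 2)

set_option maxHeartbeats 1000000 in
/-- For the Grover search problem with minimal gap `g₀ = 1/√N` and dephasing rate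
`γ = c g₀`, the optimal time scale `τ(N) = (∫_0^1 √(M(q)) dq)²` satisfies `τ = O(√N)` as
`N → ∞`: there is a constant `C` (depending only on `c`) with `τ(N) ≤ C √N` for all `N ≥ 2`. -/
theorem grover_optimal_time_scale (c : ℝ) (hc : 0 < c) :
    ∃ C : ℝ, 0 < C ∧ ∀ N : ℝ, 2 ≤ N →
      (∫ q in (0:ℝ)..1, Real.sqrt (groverMass c N q)) ^ 2 ≤ C * Real.sqrt N := by
  refine ⟨5 / c, by positivity, fun N hN => ?_⟩
  have hN0 : (0:ℝ) < N := by linarith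
  have hN1 : (1:ℝ) ≤ N := by linarith
  set s := Real.sqrt N with hs
  have hs0 : 0 < s := Real.sqrt_pos.mpr hN0
  have hs2 : s ^ 2 = N := Real.sq_sqrt hN0.le
  set k := Real.sqrt (N / 2) with hk
  have hk0 : 0 < k := Real.sqrt_pos.mpr (by linarith)
  have hk2 : k ^ 2 = N / 2 := Real.sq_sqrt (by linarith)
  set K := (Real.sqrt (c * s))⁻¹ with hK
  have hcs0 : 0 < c * s := by positivity
  have hK0 : 0 < K := by positivity
  have hK2 : K ^ 2 = (c * s)⁻¹ := by
    rw [hK, inv_pow, Real.sq_sqrt hcs0.le]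
  -- positivity / lower bound for the gap
  have haq : ∀ q : ℝ, (0:ℝ) < 1/N + (1-2*q)^2/2 := fun q => by positivity
  have hGlow : ∀ q : ℝ, 1/N + (1-2*q)^2/2 ≤ groverGapSq N q := by
    intro q
    have hid : groverGapSq N q = 1/N + (1 - 1/N) * (1-2*q)^2 := by
      unfold groverGapSq; field_simp; ring
    rw [hid]
    have h1 : (1:ℝ)/N ≤ 1/2 := by
      rw [div_le_div_iff₀ hN0 two_pos]; linarith
    nlinarith [sq_nonneg (1-2*q)]
  have hGpos : ∀ q : ℝ, 0 < groverGapSq N q := fun q =>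
    lt_of_lt_of_le (haq q) (hGlow q)
  -- pointwise bound on the mass
  have hMb : ∀ q : ℝ, groverMass c N q ≤ 1/(c*s*(1/N + (1-2*q)^2/2)^2) := by
    intro q
    set G := groverGapSq N q with hG
    have hGq : 0 < G := hGpos q
    have hNN : (1:ℝ)/N^2 < 1/N := by
      rw [div_lt_div_iff₀ (by positivity) hN0]
      nlinarith
    have hV : groverVelSq N q ≤ 4/(N*G^2) := by
      unfold groverVelSq
      rw [← hG]
      have h0 : (0:ℝ) ≤ 1/N^2 := by positivity
      have h1 : (1/N - 1/N^2) * 4 ≤ (1/N) * 4 := by nlinarith [h0]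
      calc (1/N - 1/N^2) * 4 / G^2 ≤ (1/N) * 4 / G^2 := by gcongr
        _ = 4/(N*G^2) := by field_simp
    have hVpos : 0 < groverVelSq N q := by
      unfold groverVelSq
      rw [← hG]
      have : (0:ℝ) < 1/N - 1/N^2 := by linarith
      positivity
    have hγ : (0:ℝ) < (c/s)^2 := by positivity
    have step1a : (c/s)/4 * groverVelSq N q / (G + (c/s)^2)
        ≤ (c/s)/4 * groverVelSq N q / ((c/s)^2) := by
      rw [div_le_div_iff₀ (by positivity) hγ]
      have hnum : 0 < (c/s)/4 * groverVelSq N q := by positivity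
      nlinarith [hnum, hGq, hγ]
    have step1b : (c/s)/4 * groverVelSq N q / ((c/s)^2)
        ≤ (c/s)/4 * (4/(N*G^2)) / ((c/s)^2) := by
      gcongr
    have step2 : (c/s)/4 * (4/(N*G^2)) / ((c/s)^2) = 1/(c*s*G^2) := by
      rw [← hs2]
      field_simp
    have step3 : 1/(c*s*G^2) ≤ 1/(c*s*(1/N + (1-2*q)^2/2)^2) := by
      apply one_div_le_one_div_of_le (by positivity)
      exact mul_le_mul_of_nonneg_left (pow_le_pow_left₀ (haq q).le (hGlow q) 2) (by positivity)
    have : groverMass c N q = (c/s)/4 * groverVelSq N q / (G + (c/s)^2) := by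
      unfold groverMass; rw [← hs, ← hG]
    rw [this]
    calc (c/s)/4 * groverVelSq N q / (G + (c/s)^2)
        ≤ (c/s)/4 * groverVelSq N q / ((c/s)^2) := step1a
      _ ≤ (c/s)/4 * (4/(N*G^2)) / ((c/s)^2) := step1b
      _ = 1/(c*s*G^2) := step2
      _ ≤ 1/(c*s*(1/N + (1-2*q)^2/2)^2) := step3
  -- rewrite the comparison function in arctan-friendly form
  have hd : ∀ q : ℝ, 1/(1/N + (1-2*q)^2/2) = N/(1+(k*(1-2*q))^2) := by
    intro q
    have hku : (k*(1-2*q))^2 = N/2*(1-2*q)^2 := by rw [mul_pow, hk2]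
    rw [hku]
    have h1 : (0:ℝ) < 1 + N/2*(1-2*q)^2 := by positivity
    field_simp
  -- pointwise bound on the square root of the mass
  have hkey : ∀ q : ℝ, Real.sqrt (groverMass c N q) ≤ K * (N/(1+(k*(1-2*q))^2)) := by
    intro q
    have h1 : Real.sqrt (groverMass c N q)
        ≤ Real.sqrt (1/(c*s*(1/N + (1-2*q)^2/2)^2)) := Real.sqrt_le_sqrt (hMb q)
    have h2 : Real.sqrt (1/(c*s*(1/N + (1-2*q)^2/2)^2))
        = K * (1/(1/N + (1-2*q)^2/2)) := by
      rw [one_div, Real.sqrt_inv, Real.sqrt_mul hcs0.le,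
        Real.sqrt_sq (haq q).le, mul_inv, hK]
      simp [one_div]
    rw [h2, hd q] at h1
    exact h1
  -- continuity facts
  have hGcont : Continuous (groverGapSq N) := by
    unfold groverGapSq; fun_prop
  have hVcont : Continuous (groverVelSq N) := by
    unfold groverVelSq
    exact continuous_const.div (hGcont.pow 2) (fun q => pow_ne_zero 2 (hGpos q).ne')
  have hMcont : Continuous (groverMass c N) := by
    unfold groverMass
    exact (continuous_const.mul hVcont).div (hGcont.add continuous_const)
      (fun q => (add_pos_of_pos_of_nonneg (hGpos q) (sq_nonneg _)).ne')
  have hfcont : Continuous (fun q => Real.sqrt (groverMass c N q)) :=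
    Real.continuous_sqrt.comp hMcont
  have hintcont : Continuous (fun q : ℝ => N/(1+(k*(1-2*q))^2)) := by
    exact continuous_const.div (by fun_prop) (fun q => by positivity)
  -- compare the integrals
  have hmono : (∫ q in (0:ℝ)..1, Real.sqrt (groverMass c N q))
      ≤ ∫ q in (0:ℝ)..1, K * (N/(1+(k*(1-2*q))^2)) := by
    apply intervalIntegral.integral_mono_on zero_le_one
      (hfcont.intervalIntegrable 0 1) ((continuous_const.mul hintcont).intervalIntegrable 0 1)
    intro q _
    exact hkey q
  -- compute the integral of the comparison function
  have hFderiv : ∀ q ∈ Set.uIcc (0:ℝ) 1,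
      HasDerivAt (fun q : ℝ => -(N/(2*k)) * Real.arctan (k*(1-2*q)))
        (N/(1+(k*(1-2*q))^2)) q := by
    intro q _
    have h1 : HasDerivAt (fun q : ℝ => 1 - 2*q) (-2) q := by
      simpa using ((hasDerivAt_id q).const_mul (2:ℝ)).const_sub 1
    have h2 : HasDerivAt (fun q : ℝ => k*(1-2*q)) (k*(-2)) q := h1.const_mul k
    have h3 : HasDerivAt (fun q : ℝ => Real.arctan (k*(1-2*q)))
        (1/(1+(k*(1-2*q))^2) * (k*(-2))) q := by
      simpa [Function.comp_def] using (Real.hasDerivAt_arctan (k*(1-2*q))).comp q h2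
    have h4 := h3.const_mul (-(N/(2*k)))
    refine h4.congr_deriv ?_
    have hden : (0:ℝ) < 1+(k*(1-2*q))^2 := by positivity
    field_simp [hk0.ne']
  have hint : (∫ q in (0:ℝ)..1, N/(1+(k*(1-2*q))^2))
      = -(N/(2*k)) * Real.arctan (k*(1-2*1)) - -(N/(2*k)) * Real.arctan (k*(1-2*0)) := by
    exact intervalIntegral.integral_eq_sub_of_hasDerivAt hFderiv
      (hintcont.intervalIntegrable 0 1)
  have hintval : (∫ q in (0:ℝ)..1, N/(1+(k*(1-2*q))^2)) = (N/k) * Real.arctan k := by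
    rw [hint]
    norm_num [Real.arctan_neg]
    field_simp
    ring
  have hintbound : (∫ q in (0:ℝ)..1, N/(1+(k*(1-2*q))^2)) ≤ k * Real.pi := by
    rw [hintval]
    have h1 : Real.arctan k ≤ Real.pi / 2 := (Real.arctan_lt_pi_div_two k).le
    calc (N/k) * Real.arctan k ≤ (N/k) * (Real.pi/2) := by
          apply mul_le_mul_of_nonneg_left h1
          positivity
      _ = k * Real.pi := by
          have hNk : N = 2*k^2 := by rw [hk2]; ring
          rw [hNk]
          field_simp
  -- final computation
  have hIpos : 0 ≤ (∫ q in (0:ℝ)..1, Real.sqrt (groverMass c N q)) := by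
    apply intervalIntegral.integral_nonneg zero_le_one
    intro q _
    exact Real.sqrt_nonneg _
  have hRHS : (∫ q in (0:ℝ)..1, K * (N/(1+(k*(1-2*q))^2))) ≤ K * (k * Real.pi) := by
    rw [intervalIntegral.integral_const_mul]
    exact mul_le_mul_of_nonneg_left hintbound hK0.le
  have hI : (∫ q in (0:ℝ)..1, Real.sqrt (groverMass c N q)) ≤ K * (k * Real.pi) :=
    le_trans hmono hRHS
  calc (∫ q in (0:ℝ)..1, Real.sqrt (groverMass c N q)) ^ 2
      ≤ (K * (k * Real.pi)) ^ 2 := by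
        apply pow_le_pow_left₀ hIpos hI
    _ = K^2 * k^2 * Real.pi^2 := by ring
    _ = (c*s)⁻¹ * (N/2) * Real.pi^2 := by rw [hK2, hk2]
    _ = Real.pi^2/(2*c) * s := by
        rw [← hs2]; field_simp
    _ ≤ 5/c * s := by
        have hpi : Real.pi < 3.15 := Real.pi_lt_d2
        have hpi2 : Real.pi^2 < 10 := by nlinarith [Real.pi_pos]
        apply mul_le_mul_of_nonneg_right _ hs0.le
        rw [div_le_div_iff₀ (by positivity) hc]
        nlinarith
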